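/- The map (α, β, γ, a, t, u) ↦ (a, b, N), where b = αat + β and N = (αat + β)(au + γ) + α, is a bijection from the set of 6-tuples of integers satisfying a ≥ 1, α ≥ 1, 0 ≤ β < αa, 0 ≤ γ < a, t ≥ 0, u ≥ 0 and α < αat + β, onto the set of triples (a, b, N) of positive integers with b ≥ 2 and N not divisible by b. Moreover, the inverse map is given by α = N mod b, β = b mod (αa), γ = ⌊N/b⌋ mod a, t = ⌊b/(αa)⌋, u = ⌊⌊N/b⌋/a⌋. -/
import Mathlib


/-- The set of 6-tuples `(α, β, γ, a, t, u)` of integers satisfying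
`a ≥ 1`, `α ≥ 1`, `0 ≤ β < αa`, `0 ≤ γ < a`, `t ≥ 0`, `u ≥ 0` and `α < αat + β`. -/
def GeomCodeDomain : Set (ℤ × ℤ × ℤ × ℤ × ℤ × ℤ) :=
  {q | match q with
    | (α, β, γ, a, t, u) =>
      1 ≤ a ∧ 1 ≤ α ∧ 0 ≤ β ∧ β < α * a ∧ 0 ≤ γ ∧ γ < a ∧ 0 ≤ t ∧ 0 ≤ u ∧
        α < α * a * t + β}

/-- The set of triples `(a, b, N)` of positive integers with `b ≥ 2` and
`N` not divisible by `b`. -/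
def GeomCodeCodomain : Set (ℤ × ℤ × ℤ) :=
  {p | match p with
    | (a, b, N) => 1 ≤ a ∧ 2 ≤ b ∧ 1 ≤ N ∧ ¬ b ∣ N}

/-- The map `(α, β, γ, a, t, u) ↦ (a, b, N)` with `b = αat + β` and
`N = (αat + β)(au + γ) + α`. -/
def geomCodeMap (q : ℤ × ℤ × ℤ × ℤ × ℤ × ℤ) : ℤ × ℤ × ℤ :=
  match q with
  | (α, β, γ, a, t, u) => (a, α * a * t + β, (α * a * t + β) * (a * u + γ) + α)

/-- The inverse map `(a, b, N) ↦ (α, β, γ, a, t, u)` given by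
`α = N mod b`, `β = b mod (αa)`, `γ = ⌊N/b⌋ mod a`, `t = ⌊b/(αa)⌋`, `u = ⌊⌊N/b⌋/a⌋`. -/
def geomCodeInv (p : ℤ × ℤ × ℤ) : ℤ × ℤ × ℤ × ℤ × ℤ × ℤ :=
  match p with
  | (a, b, N) => (N % b, b % ((N % b) * a), (N / b) % a, a, b / ((N % b) * a), (N / b) / a)

lemma geom_emod_key (x y d : ℤ) (h0 : 0 ≤ x) (h : x < d) : (x + d * y) % d = x := by
  rw [Int.add_mul_emod_self_left, Int.emod_eq_of_lt h0 h]

lemma geom_ediv_key (x y d : ℤ) (h0 : 0 ≤ x) (h : x < d) : (x + d * y) / d = y := by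
  rw [Int.add_mul_ediv_left _ _ (by omega : d ≠ 0), Int.ediv_eq_zero_of_lt h0 h, zero_add]

lemma geom_mapsTo : Set.MapsTo geomCodeMap GeomCodeDomain GeomCodeCodomain := by
  rintro ⟨α, β, γ, a, t, u⟩ ⟨ha, hα, hβ0, hβ, hγ0, hγ, ht, hu, hlt⟩
  have hb : 2 ≤ α * a * t + β := by omega
  have hN0 : 0 ≤ a * u + γ := by positivity
  refine ⟨ha, hb, by nlinarith, ?_⟩
  intro hdvd
  have : ((α * a * t + β) * (a * u + γ) + α) % (α * a * t + β) = α := by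
    have := geom_emod_key α (a * u + γ) (α * a * t + β) (by omega) hlt
    rw [show (α * a * t + β) * (a * u + γ) + α = α + (α * a * t + β) * (a * u + γ) by ring]
    exact this
  have h0 : ((α * a * t + β) * (a * u + γ) + α) % (α * a * t + β) = 0 :=
    Int.emod_eq_zero_of_dvd hdvd
  omega

lemma geom_leftInv : Set.LeftInvOn geomCodeInv geomCodeMap GeomCodeDomain := by
  rintro ⟨α, β, γ, a, t, u⟩ ⟨ha, hα, hβ0, hβ, hγ0, hγ, ht, hu, hlt⟩
  simp only [geomCodeMap, geomCodeInv]
  have hNb : (α * a * t + β) * (a * u + γ) + α = α + (α * a * t + β) * (a * u + γ) := by ring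
  have hmod : ((α * a * t + β) * (a * u + γ) + α) % (α * a * t + β) = α := by
    rw [hNb]; exact geom_emod_key _ _ _ (by omega) hlt
  have hdiv : ((α * a * t + β) * (a * u + γ) + α) / (α * a * t + β) = a * u + γ := by
    rw [hNb]; exact geom_ediv_key _ _ _ (by omega) hlt
  have hb : α * a * t + β = β + (α * a) * t := by ring
  have hγu : a * u + γ = γ + a * u := by ring
  rw [hmod, hdiv, hb, geom_emod_key β t (α * a) hβ0 hβ, geom_ediv_key β t (α * a) hβ0 hβ,
    hγu, geom_emod_key γ u a hγ0 hγ, geom_ediv_key γ u a hγ0 hγ]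

lemma geom_invMapsTo : Set.MapsTo geomCodeInv GeomCodeCodomain GeomCodeDomain := by
  rintro ⟨a, b, N⟩ ⟨ha, hb, hN, hnd⟩
  have hbne : b ≠ 0 := by omega
  have hα0 : 0 ≤ N % b := Int.emod_nonneg N hbne
  have hα1 : 1 ≤ N % b := by
    rcases hα0.lt_or_eq with h | h
    · omega
    · exact absurd (Int.dvd_of_emod_eq_zero h.symm) hnd
  have hαb : N % b < b := Int.emod_lt_of_pos N (by omega)
  have hαa : 0 < N % b * a := by positivity
  have hNb0 : 0 ≤ N / b := Int.ediv_nonneg (by omega) (by omega)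
  refine ⟨ha, hα1, Int.emod_nonneg b (by omega), Int.emod_lt_of_pos b hαa,
    Int.emod_nonneg _ (by omega), Int.emod_lt_of_pos _ (by omega),
    Int.ediv_nonneg (by omega) (by omega), Int.ediv_nonneg hNb0 (by omega), ?_⟩
  have := Int.mul_ediv_add_emod b (N % b * a)
  omega

lemma geom_rightInv : Set.RightInvOn geomCodeInv geomCodeMap GeomCodeCodomain := by
  rintro ⟨a, b, N⟩ ⟨ha, hb, hN, hnd⟩
  simp only [geomCodeMap, geomCodeInv]
  have h1 := Int.mul_ediv_add_emod b (N % b * a)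
  have h2 := Int.mul_ediv_add_emod (N / b) a
  have h3 := Int.mul_ediv_add_emod N b
  refine Prod.ext rfl (Prod.ext ?_ ?_) <;> simp only
  · nlinarith [h1]
  · have hmid : a * (N / b / a) + N / b % a = N / b := by linarith [h2]
    have hB : N % b * a * (b / (N % b * a)) + b % (N % b * a) = b := by nlinarith [h1]
    rw [hB, hmid]
    linarith [h3]

theorem geomCode_bijOn_and_invOn :
    Set.BijOn geomCodeMap GeomCodeDomain GeomCodeCodomain ∧
      Set.InvOn geomCodeInv geomCodeMap GeomCodeDomain GeomCodeCodomain := by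
  have hinv : Set.InvOn geomCodeInv geomCodeMap GeomCodeDomain GeomCodeCodomain :=
    ⟨geom_leftInv, geom_rightInv⟩
  exact ⟨hinv.bijOn geom_mapsTo geom_invMapsTo, hinv⟩
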